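/- arXiv:1611.02527 — 2 statements merged into one kernel-verified Lean document; each statement's English description precedes it below -/
import Mathlib

section
/- Weak König's lemma implies the longest path principle: given that every infinite binary tree has an infinite path, every binary tree T has a longest path, obtained by applying WKL to the tree T' = {a : a ∈ T or ∃ b ∈ T with |b| = ht(T) and a properly extends b}, where ht(T) is the supremum of lengths of elements of T (when T is infinite one takes T' = T). -/
def bar (α : ℕ → Bool) (n : ℕ) : List Bool := List.ofFn fun i : Fin n => α i

lemma bar_getD (l : List Bool) (k : ℕ) (hk : k ≤ l.length) :
    bar (fun i => l.getD i true) k = l.take k := by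
  apply List.ext_getElem
  · simp [bar, Nat.min_eq_left hk]
  · intro i h1 h2
    simp only [bar, List.getElem_ofFn, List.getElem_take]
    rw [List.getD_eq_getElem]

theorem wkl_implies_lpp
    (WKL : ∀ T : Set (List Bool),
      (∀ a ∈ T, ∀ b, b <+: a → b ∈ T) →
      (∀ n, ∃ a ∈ T, a.length = n) →
      ∃ α : ℕ → Bool, ∀ n, bar α n ∈ T) :
    ∀ T : Set (List Bool), (∀ a ∈ T, ∀ b, b <+: a → b ∈ T) →
      ∃ α : ℕ → Bool, ∀ n, bar α n ∉ T → ∀ a ∈ T, a.length < n := by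
  intro T hpc
  classical
  by_cases hinf : ∀ n, ∃ a ∈ T, a.length = n
  · obtain ⟨α, hα⟩ := WKL T hpc hinf
    exact ⟨α, fun n hn => absurd (hα n) hn⟩
  · push_neg at hinf
    obtain ⟨N, hN⟩ := hinf
    -- all elements of T have length < N
    have hbound : ∀ a ∈ T, a.length < N := by
      intro a ha
      by_contra h
      push_neg at h
      exact hN (a.take N) (hpc a ha _ (List.take_prefix N a)) (by simp [Nat.min_eq_left h])
    by_cases hne : ∃ a, a ∈ T
    · obtain ⟨a₀, ha₀⟩ := hne
      set P : ℕ → Prop := fun k => ∃ a ∈ T, a.length = k with hP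
      set m := Nat.findGreatest P N with hm
      have hPm : P m := by
        apply Nat.findGreatest_spec (m := a₀.length)
        · exact le_of_lt (hbound a₀ ha₀)
        · exact ⟨a₀, ha₀, rfl⟩
      obtain ⟨b, hb, hbl⟩ := hPm
      have hmax : ∀ a ∈ T, a.length ≤ m := by
        intro a ha
        exact Nat.le_findGreatest (le_of_lt (hbound a ha)) ⟨a, ha, rfl⟩
      refine ⟨fun i => b.getD i true, fun n hn a ha => ?_⟩
      by_contra h
      push_neg at h
      have hnm : n ≤ m := le_trans h (hmax a ha)
      have : bar (fun i => b.getD i true) n = b.take n := bar_getD b n (by omega)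
      rw [this] at hn
      exact hn (hpc b hb _ (List.take_prefix n b))
    · push_neg at hne
      exact ⟨fun _ => true, fun n _ a ha => absurd ha (hne a)⟩
end

section
/- The longest path principle implies weak König's lemma: if every binary tree has a longest path (α such that whenever ᾱ(n) ∉ T, all elements of T have length < n), then every infinite binary tree has an infinite path. -/
theorem lpp_implies_wkl
    (LPP : ∀ T : Set (List Bool), (∀ a ∈ T, ∀ b, b <+: a → b ∈ T) →
      ∃ α : ℕ → Bool, ∀ n, bar α n ∉ T → ∀ a ∈ T, a.length < n) :
    ∀ T : Set (List Bool), (∀ a ∈ T, ∀ b, b <+: a → b ∈ T) →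
      (∀ n, ∃ a ∈ T, a.length = n) →
      ∃ α : ℕ → Bool, ∀ n, bar α n ∈ T := by
  intro T hT hinf
  obtain ⟨α, hα⟩ := LPP T hT
  refine ⟨α, fun n => ?_⟩
  by_contra h
  obtain ⟨a, haT, hlen⟩ := hinf n
  exact absurd (hα n h a haT) (by omega)
end
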